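/- Let ≿ be a complete transitive relation on a compact convex subset X of a Hausdorff topological vector space with closed contour sets, satisfying betweenness, with best and worst elements x* ≻ x_*, and let U be the calibration representation (x ∼ m_{U(x)}). Then U is continuous on X. -/

import Mathlib

open Set

theorem calibration_continuous
    {E : Type*} [AddCommGroup E] [Module ℝ E] [TopologicalSpace E]
    [IsTopologicalAddGroup E] [ContinuousSMul ℝ E] [T2Space E]
    (X : Set E) (hXconv : Convex ℝ X) (hXcomp : IsCompact X)
    (r : E → E → Prop)
    (hcomp : ∀ x ∈ X, ∀ y ∈ X, r x y ∨ r y x)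
    (htrans : ∀ x ∈ X, ∀ y ∈ X, ∀ z ∈ X, r x y → r y z → r x z)
    (hclosed : ∀ y ∈ X, IsClosed {x ∈ X | r x y} ∧ IsClosed {x ∈ X | r y x})
    (hbet : ∀ x ∈ X, ∀ y ∈ X, ∀ l ∈ Ioo (0:ℝ) 1,
      (r x y ∧ ¬ r y x) →
        ((r x (l • x + (1 - l) • y) ∧ ¬ r (l • x + (1 - l) • y) x) ∧
         (r (l • x + (1 - l) • y) y ∧ ¬ r y (l • x + (1 - l) • y))))
    (xstar xlow : E) (hxstar : xstar ∈ X) (hxlow : xlow ∈ X)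
    (hbest : ∀ x ∈ X, r xstar x) (hworst : ∀ x ∈ X, r x xlow)
    (hstrict : r xstar xlow ∧ ¬ r xlow xstar)
    (U : E → ℝ)
    (hU : ∀ x ∈ X, U x ∈ Icc (0:ℝ) 1 ∧
      (r x (U x • xstar + (1 - U x) • xlow) ∧ r (U x • xstar + (1 - U x) • xlow) x)) :
    ContinuousOn U X := by
  set m : ℝ → E := fun t => t • xstar + (1 - t) • xlow with hm
  have hmem : ∀ t, 0 ≤ t → t ≤ 1 → m t ∈ X := fun t h0 h1 =>
    hXconv hxstar hxlow h0 (by linarith) (by ring)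
  have hm0 : m 0 = xlow := by simp [hm]
  have hm1 : m 1 = xstar := by simp [hm]
  have hrefl : ∀ y ∈ X, r y y := fun y hy => (hcomp y hy y hy).elim id id
  -- strict monotonicity
  have hmono : ∀ s t : ℝ, 0 ≤ s → s < t → t ≤ 1 → r (m t) (m s) ∧ ¬ r (m s) (m t) := by
    intro s t hs hst ht1
    have htop : r (m t) xlow ∧ ¬ r xlow (m t) := by
      rcases eq_or_lt_of_le ht1 with h | h
      · rw [h, hm1]; exact hstrict
      · exact (hbet xstar hxstar xlow hxlow t ⟨lt_of_le_of_lt hs hst, h⟩ hstrict).2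
    rcases eq_or_lt_of_le hs with h | h
    · rw [← h, hm0]; exact htop
    · -- 0 < s < t
      have ht0 : (0:ℝ) < t := lt_trans h hst
      have hl : s / t ∈ Ioo (0:ℝ) 1 := ⟨div_pos h ht0, (div_lt_one ht0).2 hst⟩
      have hkey := (hbet (m t) (hmem t (le_of_lt ht0) ht1) xlow hxlow (s / t) hl htop).1
      have heq : (s / t) • m t + (1 - s / t) • xlow = m s := by
        have hlt : (s / t) * t = s := div_mul_cancel₀ s (ne_of_gt ht0)
        have : (s / t) • m t + (1 - s / t) • xlow
            = ((s / t) * t) • xstar + ((s / t) * (1 - t) + (1 - s / t)) • xlow := by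
          simp only [hm]; module
        rw [this, hlt]
        have h2 : (s / t) * (1 - t) + (1 - s / t) = 1 - s := by
          have : (s / t) * (1 - t) + (1 - s / t) = 1 - (s / t) * t := by ring
          rw [this, hlt]
        rw [h2]
      rw [heq] at hkey
      exact hkey
  -- characterization of U
  have hge : ∀ x ∈ X, ∀ t : ℝ, 0 < t → t ≤ 1 → (t ≤ U x ↔ r x (m t)) := by
    intro x hx t ht0 ht1
    obtain ⟨⟨hU0, hU1⟩, hx1, hx2⟩ := hU x hx
    have hmUx : m (U x) ∈ X := hmem _ hU0 hU1
    have hmt : m t ∈ X := hmem t (le_of_lt ht0) ht1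
    constructor
    · intro h
      have h2 : r (m (U x)) (m t) := by
        rcases eq_or_lt_of_le h with h | h
        · rw [h]; exact hrefl _ hmUx
        · exact (hmono t (U x) (le_of_lt ht0) h hU1).1
      exact htrans x hx _ hmUx _ hmt hx1 h2
    · intro h
      by_contra hc
      push_neg at hc
      have := (hmono (U x) t hU0 hc ht1).2
      exact this (htrans _ hmUx x hx _ hmt hx2 h)
  have hle : ∀ x ∈ X, ∀ t : ℝ, 0 ≤ t → t < 1 → (U x ≤ t ↔ r (m t) x) := by
    intro x hx t ht0 ht1
    obtain ⟨⟨hU0, hU1⟩, hx1, hx2⟩ := hU x hx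
    have hmUx : m (U x) ∈ X := hmem _ hU0 hU1
    have hmt : m t ∈ X := hmem t ht0 (le_of_lt ht1)
    constructor
    · intro h
      have h2 : r (m t) (m (U x)) := by
        rcases eq_or_lt_of_le h with h | h
        · rw [h]; exact hrefl _ hmt
        · exact (hmono (U x) t hU0 h (le_of_lt ht1)).1
      exact htrans _ hmt _ hmUx x hx h2 hx2
    · intro h
      by_contra hc
      push_neg at hc
      have := (hmono t (U x) ht0 hc hU1).2
      exact this (htrans _ hmt x hx _ hmUx h hx1)
  -- closedness of sublevel/superlevel sets in the subtype
  rw [continuousOn_iff_continuous_restrict]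
  set f : X → ℝ := X.restrict U with hf
  have keyGe : ∀ t : ℝ, IsClosed {x : X | t ≤ f x} := by
    intro t
    rcases le_or_gt t 0 with h | h
    · have : {x : X | t ≤ f x} = univ := by
        ext x
        simp only [mem_setOf_eq, mem_univ, iff_true]
        exact le_trans h ((hU x x.2).1.1)
      rw [this]; exact isClosed_univ
    rcases le_or_gt t 1 with h1 | h1
    · have : {x : X | t ≤ f x} = Subtype.val ⁻¹' {y ∈ X | r y (m t)} := by
        ext x
        simp only [mem_setOf_eq, mem_preimage, x.2, true_and]
        exact hge x x.2 t h h1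
      rw [this]
      exact ((hclosed (m t) (hmem t (le_of_lt h) h1)).1).preimage continuous_subtype_val
    · have : {x : X | t ≤ f x} = ∅ := by
        ext x
        simp only [mem_setOf_eq, mem_empty_iff_false, iff_false, not_le]
        exact lt_of_le_of_lt ((hU x x.2).1.2) h1
      rw [this]; exact isClosed_empty
  have keyLe : ∀ t : ℝ, IsClosed {x : X | f x ≤ t} := by
    intro t
    rcases lt_or_ge t 0 with h | h
    · have : {x : X | f x ≤ t} = ∅ := by
        ext x
        simp only [mem_setOf_eq, mem_empty_iff_false, iff_false, not_le]
        exact lt_of_lt_of_le h ((hU x x.2).1.1)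
      rw [this]; exact isClosed_empty
    rcases lt_or_ge t 1 with h1 | h1
    · have : {x : X | f x ≤ t} = Subtype.val ⁻¹' {y ∈ X | r (m t) y} := by
        ext x
        simp only [mem_setOf_eq, mem_preimage, x.2, true_and]
        exact hle x x.2 t h h1
      rw [this]
      exact ((hclosed (m t) (hmem t h (le_of_lt h1))).2).preimage continuous_subtype_val
    · have : {x : X | f x ≤ t} = univ := by
        ext x
        simp only [mem_setOf_eq, mem_univ, iff_true]
        exact le_trans ((hU x x.2).1.2) h1
      rw [this]; exact isClosed_univ
  -- continuity from closed level sets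
  refine continuous_iff_continuousAt.2 fun x => ?_
  rw [ContinuousAt, tendsto_order]
  constructor
  · intro a ha
    have hopen : IsOpen {y : X | a < f y} := by
      have : {y : X | a < f y} = {y : X | f y ≤ a}ᶜ := by
        ext y; simp [not_le]
      rw [this]; exact (keyLe a).isOpen_compl
    exact hopen.mem_nhds ha
  · intro a ha
    have hopen : IsOpen {y : X | f y < a} := by
      have : {y : X | f y < a} = {y : X | a ≤ f y}ᶜ := by
        ext y; simp [not_le]
      rw [this]; exact (keyGe a).isOpen_compl
    exact hopen.mem_nhds ha
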